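/- Let H be a separable Hilbert space and let D_s, for s in a compact connected subset U of R^m containing 0, be a family of self-adjoint unbounded Fredholm operators on H with common domain dom(D) (the domain of D := D_0), such that all graph norms are equivalent to that of D and such that s ↦ D_s is continuous as a map from U to the bounded operators from (dom(D), graph norm) to H. Then s ↦ D_s is continuous with respect to the gap metric d_gap(D_1, D_2) := ‖(D_1 + i)^{-1} − (D_2 + i)^{-1}‖. -/

import Mathlib

open scoped ComplexInnerProductSpace

/-- A family of self-adjoint unbounded Fredholm operators `D_s`, `s ∈ U ⊆ ℝ^m` compact
connected with `0 ∈ U`, with common domain (modelled by a Hilbert space `Dm` with its graph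
norm, mapped into `H` by `ι`), depending continuously on `s` as bounded operators from the
domain to `H`, is continuous in the gap topology, i.e. the resolvents `R s = (D_s + i)⁻¹`
depend norm-continuously on `s`. -/
theorem stmt_0 {m : ℕ} (U : Set (EuclideanSpace ℝ (Fin m)))
    (hUcpt : IsCompact U) (hUconn : IsConnected U) (hU0 : 0 ∈ U)
    {H Dm : Type*} [NormedAddCommGroup H] [InnerProductSpace ℂ H] [CompleteSpace H]
    [TopologicalSpace.SeparableSpace H]
    [NormedAddCommGroup Dm] [InnerProductSpace ℂ Dm] [CompleteSpace Dm]
    (ι : Dm →L[ℂ] H) (hι : Function.Injective ι) (hdense : DenseRange ι)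
    (A : U → (Dm →L[ℂ] H)) (hA : Continuous A)
    -- each `D_s` is symmetric (self-adjointness, part 1)
    (hsym : ∀ s : U, ∀ u v : Dm, ⟪ι u, A s v⟫ = ⟪A s u, ι v⟫)
    -- each `D_s` is Fredholm
    (hker : ∀ s : U, FiniteDimensional ℂ ↥(LinearMap.ker (A s : Dm →ₗ[ℂ] H)))
    (hcoker : ∀ s : U, ∃ W : Submodule ℂ H, FiniteDimensional ℂ ↥W ∧
      LinearMap.range (A s : Dm →ₗ[ℂ] H) ⊔ W = ⊤)
    -- the resolvents `(D_s + i)⁻¹` exist (self-adjointness, part 2)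
    (R : U → (H →L[ℂ] H))
    (hR : ∀ s : U, ∀ u : Dm, R s (A s u + Complex.I • ι u) = ι u)
    (hRsurj : ∀ s : U, ∀ v : H, ∃ u : Dm, A s u + Complex.I • ι u = v) :
    Continuous R := by

  classical
  -- `T s = D_s + i` as a bounded operator from the domain to `H`.
  set T : U → (Dm →L[ℂ] H) := fun s => A s + Complex.I • ι with hT_def
  have hTapp : ∀ (s : U) (u : Dm), T s u = A s u + Complex.I • ι u := by
    intro s u; simp [hT_def]
  have hTcont : Continuous T := by
    apply hA.add continuous_const
  -- each `T s` is bijective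
  have hker' : ∀ s : U, LinearMap.ker (T s : Dm →ₗ[ℂ] H) = ⊥ := by
    intro s
    rw [LinearMap.ker_eq_bot']
    intro u hu
    have h1 : R s (T s u) = ι u := by rw [hTapp]; exact hR s u
    rw [show T s u = 0 from hu] at h1
    simp only [map_zero] at h1
    exact hι (by simpa using h1.symm)
  have hsurj' : ∀ s : U, LinearMap.range (T s : Dm →ₗ[ℂ] H) = ⊤ := by
    intro s
    rw [LinearMap.range_eq_top]
    intro v
    obtain ⟨u, hu⟩ := hRsurj s v
    exact ⟨u, by rw [ContinuousLinearMap.coe_coe, hTapp]; exact hu⟩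
  -- the continuous linear equivalences
  let e : U → (Dm ≃L[ℂ] H) := fun s =>
    ContinuousLinearEquiv.ofBijective (T s) (hker' s) (hsurj' s)
  have he : ∀ s : U, ((e s : Dm →L[ℂ] H)) = T s := fun s =>
    ContinuousLinearEquiv.coe_ofBijective _ _ _
  -- `R s = ι ∘ (T s)⁻¹`
  have hRs : ∀ s : U, R s = ι.comp (ContinuousLinearMap.inverse (T s)) := by
    intro s
    ext v
    obtain ⟨u, hu⟩ := hRsurj s v
    have hu' : T s u = v := by rw [hTapp]; exact hu
    have h1 : R s v = ι u := by rw [← hu]; exact hR s u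
    have h2 : ContinuousLinearMap.inverse (T s) v = u := by
      rw [← he s, ContinuousLinearMap.inverse_equiv]
      rw [← hu', ← he s]
      exact (e s).symm_apply_apply u
    simp [h1, h2]
  have : Continuous fun s => ι.comp (ContinuousLinearMap.inverse (T s)) := by
    have hinv : Continuous fun s => ContinuousLinearMap.inverse (T s) := by
      rw [continuous_iff_continuousAt]
      intro s
      have h1 : ContinuousAt ContinuousLinearMap.inverse (T s) := by
        rw [← he s]
        exact (contDiffAt_map_inverse (𝕜 := ℂ) (n := 1) (e s)).continuousAt
      exact h1.comp hTcont.continuousAt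
    exact (continuous_const.clm_comp hinv)
  have heq : R = fun s => ι.comp (ContinuousLinearMap.inverse (T s)) := funext hRs
  rw [heq]
  exact this
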